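/- Suppose n ≥ 2 and {1,…,n} is the disjoint union of two nonempty subsets S_1 and S_2 such that the sequential weak values are weakly independent over this splitting, i.e. w(T_1 ∪ T_2) = w(T_1)·w(T_2) for every nonempty T_1 ⊆ S_1 and every nonempty T_2 ⊆ S_2. Then the cumulant of the sequential weak values of the full set vanishes: Σ over all set partitions {B_1,…,B_k} of {1,…,n} of (k−1)!·(−1)^{k−1}·∏_{j=1}^k w(B_j) = 0. -/

import Mathlib

/-- The operator `M(S) = U_{n+1} B_n U_n ⋯ B_1 U_1` of a sequential weak measurement,
where `B_k = A_k` if `k ∈ S` and `B_k = 1` otherwise (here indices are `0`-based: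
`A : Fin n` are the observables and `U : Fin (n+1)` the evolutions, `U k` being the
evolution applied just before the observable `A k`). -/
noncomputable def seqOp {H : Type*} [AddCommGroup H] [Module ℂ H] (n : ℕ)
    (A : Fin n → Module.End ℂ H) (U : Fin (n + 1) → Module.End ℂ H)
    (S : Finset (Fin n)) : Module.End ℂ H :=
  U (Fin.last n) *
    ((List.ofFn fun k : Fin n => (if k ∈ S then A k else 1) * U k.castSucc).reverse).prod

/-- The sequential weak value `w(S) = ⟨ψ_f, M(S) ψ_i⟩ / ⟨ψ_f, M(∅) ψ_i⟩` of the subset `S`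
of observables. -/
noncomputable def weakValue {H : Type*} [NormedAddCommGroup H] [InnerProductSpace ℂ H]
    (n : ℕ) (A : Fin n → Module.End ℂ H) (U : Fin (n + 1) → Module.End ℂ H)
    (ψi ψf : H) (S : Finset (Fin n)) : ℂ :=
  (inner ℂ ψf (seqOp n A U S ψi) : ℂ) / (inner ℂ ψf (seqOp n A U ∅ ψi) : ℂ)


section CumulantAux
open Finset



lemma alt_sum_choose : ∀ (A B : ℕ),
    ∑ m ∈ Finset.range (A + 2),
      (-1 : ℤ) ^ m * ((A + 1).choose m) * ((A + B + 1 - m).choose A) = 0 := by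
  intro A
  induction A with
  | zero => intro B; simp [Finset.sum_range_succ]
  | succ A ih =>
    intro B
    have hS : ∑ m ∈ Finset.range (A + 3),
        (-1 : ℤ) ^ m * ((A + 2).choose m) * ((A + 1 + B + 1 - m).choose (A + 1))
        = ∑ m ∈ Finset.range (A + 2),
            (-1 : ℤ) ^ m * ((A + 1).choose m) * ((A + B + 1 - m).choose A) := by
      rw [Finset.sum_range_succ' (fun m => (-1 : ℤ) ^ m * ((A + 2).choose m)
        * ((A + 1 + B + 1 - m).choose (A + 1))) (A + 2)]
      have step : ∀ j ∈ Finset.range (A + 2),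
          (-1 : ℤ) ^ (j + 1) * ((A + 2).choose (j + 1)) * ((A + 1 + B + 1 - (j + 1)).choose (A + 1))
          = -((-1 : ℤ) ^ j * ((A + 1).choose (j + 1)) * ((A + B + 1 - j).choose (A + 1)))
            + -((-1 : ℤ) ^ j * ((A + 1).choose j) * ((A + B + 1 - j).choose (A + 1))) := by
        intro j hj
        have e1 : A + 1 + B + 1 - (j + 1) = A + B + 1 - j := by omega
        rw [e1, Nat.choose_succ_succ' (A + 1) j]
        push_cast
        ring
      rw [Finset.sum_congr rfl step, Finset.sum_add_distrib]
      have hS₁ : (∑ j ∈ Finset.range (A + 2),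
            -((-1 : ℤ) ^ j * ((A + 1).choose (j + 1)) * ((A + B + 1 - j).choose (A + 1))))
          + (-1 : ℤ) ^ 0 * ((A + 2).choose 0) * ((A + 1 + B + 1 - 0).choose (A + 1))
          = ∑ m ∈ Finset.range (A + 2),
              (-1 : ℤ) ^ m * ((A + 1).choose m) * ((A + B + 2 - m).choose (A + 1)) := by
        have h0 := Finset.sum_range_succ' (fun m => (-1 : ℤ) ^ m * ((A + 1).choose m)
          * ((A + B + 2 - m).choose (A + 1))) (A + 2)
        rw [Finset.sum_range_succ] at h0
        have htop : ((-1 : ℤ) ^ (A + 2) * ((A + 1).choose (A + 2))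
            * ((A + B + 2 - (A + 2)).choose (A + 1))) = 0 := by
          rw [Nat.choose_eq_zero_of_lt (by omega)]; push_cast; ring
        rw [htop, add_zero] at h0
        rw [h0]
        congr 1
        · apply Finset.sum_congr rfl
          intro j hj
          have e2 : A + B + 2 - (j + 1) = A + B + 1 - j := by omega
          rw [e2]; push_cast; ring
        · have e3 : A + 1 + B + 1 - 0 = A + B + 2 - 0 := by omega
          rw [e3]; simp
      calc (∑ j ∈ Finset.range (A + 2),
              -((-1 : ℤ) ^ j * ((A + 1).choose (j + 1)) * ((A + B + 1 - j).choose (A + 1))))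
            + (∑ j ∈ Finset.range (A + 2),
              -((-1 : ℤ) ^ j * ((A + 1).choose j) * ((A + B + 1 - j).choose (A + 1))))
            + (-1 : ℤ) ^ 0 * ((A + 2).choose 0) * ((A + 1 + B + 1 - 0).choose (A + 1))
          = ((∑ j ∈ Finset.range (A + 2),
              -((-1 : ℤ) ^ j * ((A + 1).choose (j + 1)) * ((A + B + 1 - j).choose (A + 1))))
            + (-1 : ℤ) ^ 0 * ((A + 2).choose 0) * ((A + 1 + B + 1 - 0).choose (A + 1)))
            + (∑ j ∈ Finset.range (A + 2),
              -((-1 : ℤ) ^ j * ((A + 1).choose j) * ((A + B + 1 - j).choose (A + 1)))) := by ring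
        _ = (∑ m ∈ Finset.range (A + 2),
              (-1 : ℤ) ^ m * ((A + 1).choose m) * ((A + B + 2 - m).choose (A + 1)))
            + (∑ j ∈ Finset.range (A + 2),
              -((-1 : ℤ) ^ j * ((A + 1).choose j) * ((A + B + 1 - j).choose (A + 1)))) := by
            rw [hS₁]
        _ = ∑ m ∈ Finset.range (A + 2),
              (-1 : ℤ) ^ m * ((A + 1).choose m) * ((A + B + 1 - m).choose A) := by
            rw [← Finset.sum_add_distrib]
            apply Finset.sum_congr rfl
            intro m hm
            have hm' : m < A + 2 := Finset.mem_range.mp hm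
            have e4 : A + B + 2 - m = (A + B + 1 - m) + 1 := by omega
            rw [e4, Nat.choose_succ_succ' (A + B + 1 - m) A]
            push_cast
            ring
    rw [hS]; exact ih B

lemma key_identity (A B : ℕ) :
    ∑ m ∈ Finset.range (A + 2),
      ((A + 1).choose m : ℂ) * ((B + 1).descFactorial m : ℂ) *
        (((A + B + 1 - m).factorial : ℂ) * (-1) ^ (A + B + 1 - m)) = 0 := by
  have hterm : ∀ m ∈ Finset.range (A + 2),
      ((A + 1).choose m : ℂ) * ((B + 1).descFactorial m : ℂ) *
        (((A + B + 1 - m).factorial : ℂ) * (-1) ^ (A + B + 1 - m))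
      = (((B + 1).factorial : ℂ) * (A.factorial : ℂ) * (-1) ^ (A + B + 1)) *
          ((-1) ^ m * ((A + 1).choose m : ℂ) * (((A + B + 1 - m).choose A : ℂ))) := by
    intro m hm
    have hm' : m < A + 2 := Finset.mem_range.mp hm
    have hnat : (B + 1).descFactorial m * (A + B + 1 - m).factorial
        = (B + 1).factorial * A.factorial * ((A + B + 1 - m).choose A) := by
      by_cases hmb : m ≤ B + 1
      · have h1 := Nat.choose_mul_factorial_mul_factorial
          (show A ≤ A + B + 1 - m by omega)
        have h2 := Nat.factorial_mul_descFactorial hmb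
        have e : A + B + 1 - m - A = B + 1 - m := by omega
        rw [e] at h1
        calc (B + 1).descFactorial m * (A + B + 1 - m).factorial
            = (B + 1).descFactorial m * ((A + B + 1 - m).choose A * A.factorial
                * (B + 1 - m).factorial) := by rw [h1]
          _ = ((B + 1 - m).factorial * (B + 1).descFactorial m) * A.factorial
                * ((A + B + 1 - m).choose A) := by ring
          _ = (B + 1).factorial * A.factorial * ((A + B + 1 - m).choose A) := by rw [h2]
      · rw [Nat.descFactorial_eq_zero_iff_lt.mpr (by omega),
          Nat.choose_eq_zero_of_lt (by omega)]
        simp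
    have hsign : (-1 : ℂ) ^ (A + B + 1 - m) = (-1) ^ (A + B + 1) * (-1) ^ m := by
      have hm2 : (-1 : ℂ) ^ m * (-1) ^ m = 1 := by
        rw [← pow_add]; exact Even.neg_one_pow ⟨m, rfl⟩
      have h1 : (-1 : ℂ) ^ (A + B + 1 - m) * (-1) ^ m = (-1) ^ (A + B + 1) := by
        rw [← pow_add]; congr 1; omega
      calc (-1 : ℂ) ^ (A + B + 1 - m)
          = (-1 : ℂ) ^ (A + B + 1 - m) * ((-1) ^ m * (-1) ^ m) := by rw [hm2, mul_one]
        _ = ((-1 : ℂ) ^ (A + B + 1 - m) * (-1) ^ m) * (-1) ^ m := by ring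
        _ = (-1) ^ (A + B + 1) * (-1) ^ m := by rw [h1]
    have hnatC : ((B + 1).descFactorial m : ℂ) * ((A + B + 1 - m).factorial : ℂ)
        = ((B + 1).factorial : ℂ) * (A.factorial : ℂ) * ((A + B + 1 - m).choose A : ℂ) := by
      exact_mod_cast congrArg (fun x : ℕ => (x : ℂ)) hnat
    calc ((A + 1).choose m : ℂ) * ((B + 1).descFactorial m : ℂ) *
          (((A + B + 1 - m).factorial : ℂ) * (-1) ^ (A + B + 1 - m))
        = (((B + 1).descFactorial m : ℂ) * ((A + B + 1 - m).factorial : ℂ)) *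
            ((A + 1).choose m : ℂ) * (-1) ^ (A + B + 1 - m) := by ring
      _ = ((B + 1).factorial : ℂ) * (A.factorial : ℂ) * ((A + B + 1 - m).choose A : ℂ) *
            ((A + 1).choose m : ℂ) * ((-1) ^ (A + B + 1) * (-1) ^ m) := by
          rw [hnatC, hsign]
      _ = (((B + 1).factorial : ℂ) * (A.factorial : ℂ) * (-1) ^ (A + B + 1)) *
            ((-1) ^ m * ((A + 1).choose m : ℂ) * (((A + B + 1 - m).choose A : ℂ))) := by ring
  rw [Finset.sum_congr rfl hterm, ← Finset.mul_sum]
  have hz : ∑ m ∈ Finset.range (A + 2),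
      (-1 : ℂ) ^ m * ((A + 1).choose m : ℂ) * (((A + B + 1 - m).choose A : ℂ)) = 0 := by
    have h := alt_sum_choose A B
    have := congrArg (fun x : ℤ => (x : ℂ)) h
    push_cast at this
    convert this using 2 <;> push_cast <;> ring
  rw [hz, mul_zero]



/-- Partial matchings between `Q₁` and `Q₂`: finsets of pairs that are graphs of
partial bijections. -/
def matchings {β γ : Type*} [DecidableEq β] [DecidableEq γ]
    (Q₁ : Finset β) (Q₂ : Finset γ) : Finset (Finset (β × γ)) :=
  (Q₁ ×ˢ Q₂).powerset.filter
    (fun M => ∀ p ∈ M, ∀ q ∈ M, (p.1 = q.1 ∨ p.2 = q.2) → p = q)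

lemma mem_matchings {β γ : Type*} [DecidableEq β] [DecidableEq γ]
    {Q₁ : Finset β} {Q₂ : Finset γ} {M : Finset (β × γ)} :
    M ∈ matchings Q₁ Q₂ ↔ M ⊆ Q₁ ×ˢ Q₂ ∧
      ∀ p ∈ M, ∀ q ∈ M, (p.1 = q.1 ∨ p.2 = q.2) → p = q := by
  simp [matchings]

lemma card_image_fst {β γ : Type*} [DecidableEq β] [DecidableEq γ]
    {Q₁ : Finset β} {Q₂ : Finset γ} {M : Finset (β × γ)} (hM : M ∈ matchings Q₁ Q₂) :
    (M.image Prod.fst).card = M.card :=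
  Finset.card_image_of_injOn fun p hp q hq h => (mem_matchings.mp hM).2 p hp q hq (Or.inl h)

lemma card_image_snd {β γ : Type*} [DecidableEq β] [DecidableEq γ]
    {Q₁ : Finset β} {Q₂ : Finset γ} {M : Finset (β × γ)} (hM : M ∈ matchings Q₁ Q₂) :
    (M.image Prod.snd).card = M.card :=
  Finset.card_image_of_injOn fun p hp q hq h => (mem_matchings.mp hM).2 p hp q hq (Or.inr h)

lemma card_matchings_fiber {β γ : Type*} [DecidableEq β] [DecidableEq γ]
    (Q₁ : Finset β) (Q₂ : Finset γ) :
    ∀ T₁ : Finset β, T₁ ⊆ Q₁ →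
      ((matchings Q₁ Q₂).filter (fun M => M.image Prod.fst = T₁)).card
        = Q₂.card.descFactorial T₁.card := by
  intro T₁
  induction T₁ using Finset.induction_on with
  | empty =>
    intro _
    have he : (matchings Q₁ Q₂).filter (fun M => M.image Prod.fst = (∅ : Finset β))
        = {∅} := by
      ext M
      simp only [Finset.mem_filter, Finset.mem_singleton, Finset.image_eq_empty]
      constructor
      · rintro ⟨-, h⟩; exact h
      · rintro rfl
        exact ⟨mem_matchings.mpr ⟨Finset.empty_subset _, by simp⟩, rfl⟩
    rw [he]; simp
  | @insert C₁ T₁ hC₁ ih =>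
    intro hsub
    have hC₁Q : C₁ ∈ Q₁ := hsub (Finset.mem_insert_self _ _)
    have hTQ : T₁ ⊆ Q₁ := fun x hx => hsub (Finset.mem_insert_of_mem hx)
    have hset : (matchings Q₁ Q₂).filter (fun M => M.image Prod.fst = insert C₁ T₁)
        = ((matchings Q₁ Q₂).filter (fun M => M.image Prod.fst = T₁)).biUnion
            (fun M' => (Q₂ \ M'.image Prod.snd).image (fun C₂ => insert (C₁, C₂) M')) := by
      ext M
      simp only [Finset.mem_filter, Finset.mem_biUnion, Finset.mem_image, Finset.mem_sdiff]
      constructor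
      · rintro ⟨hM, himg⟩
        obtain ⟨hMsub, hmatch⟩ := mem_matchings.mp hM
        have hC₁img : C₁ ∈ M.image Prod.fst := by
          rw [himg]; exact Finset.mem_insert_self _ _
        obtain ⟨p, hp0, hp1⟩ := Finset.mem_image.mp hC₁img
        set C₂ := p.2 with hC₂def
        have hp : (C₁, C₂) ∈ M := by
          have : p = (C₁, C₂) := by rw [hC₂def, ← hp1]
          rwa [← this]
        set M' := M.erase (C₁, C₂) with hM'def
        have hM'sub : M' ⊆ M := Finset.erase_subset _ _
        have hM'match : M' ∈ matchings Q₁ Q₂ := by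
          refine mem_matchings.mpr ⟨hM'sub.trans hMsub, ?_⟩
          intro p hp' q hq' h
          exact hmatch p (hM'sub hp') q (hM'sub hq') h
        have himg' : M'.image Prod.fst = T₁ := by
          ext t
          simp only [Finset.mem_image]
          constructor
          · rintro ⟨q, hq, rfl⟩
            have hqM : q ∈ M := hM'sub hq
            have : q.1 ∈ insert C₁ T₁ := by
              rw [← himg]; exact Finset.mem_image_of_mem _ hqM
            rcases Finset.mem_insert.mp this with h | h
            · exfalso
              have : q = (C₁, C₂) := hmatch q hqM (C₁, C₂) hp (Or.inl h)
              exact (Finset.mem_erase.mp hq).1 this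
            · exact h
          · intro ht
            have : t ∈ M.image Prod.fst := by
              rw [himg]; exact Finset.mem_insert_of_mem ht
            obtain ⟨q, hq, rfl⟩ := Finset.mem_image.mp this
            refine ⟨q, Finset.mem_erase.mpr ⟨?_, hq⟩, rfl⟩
            rintro rfl
            exact hC₁ ht
        refine ⟨M', ⟨hM'match, himg'⟩, C₂, ⟨?_, ?_⟩, ?_⟩
        · exact (Finset.mem_product.mp (hMsub hp)).2
        · rintro ⟨q, hq, hq2⟩
          have : q = (C₁, C₂) := hmatch q (hM'sub hq) (C₁, C₂) hp (Or.inr hq2)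
          exact (Finset.mem_erase.mp hq).1 this
        · exact Finset.insert_erase hp
      · rintro ⟨M', ⟨hM', himg'⟩, C₂, ⟨hC₂Q, hC₂img⟩, rfl⟩
        obtain ⟨hM'sub, hmatch'⟩ := mem_matchings.mp hM'
        have hnew : (C₁, C₂) ∈ Q₁ ×ˢ Q₂ := Finset.mem_product.mpr ⟨hC₁Q, hC₂Q⟩
        constructor
        · refine mem_matchings.mpr ⟨?_, ?_⟩
          · intro q hq
            rcases Finset.mem_insert.mp hq with rfl | h
            · exact hnew
            · exact hM'sub h
          · intro p hp q hq h
            rcases Finset.mem_insert.mp hp with rfl | hp' <;>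
              rcases Finset.mem_insert.mp hq with rfl | hq'
            · rfl
            · exfalso
              rcases h with h | h
              · exact hC₁ (himg' ▸ Finset.mem_image.mpr ⟨q, hq', h.symm⟩)
              · exact hC₂img ⟨q, hq', h.symm⟩
            · exfalso
              rcases h with h | h
              · exact hC₁ (himg' ▸ Finset.mem_image.mpr ⟨p, hp', h⟩)
              · exact hC₂img ⟨p, hp', h⟩
            · exact hmatch' p hp' q hq' h
        · rw [Finset.image_insert, himg']
    rw [hset]
    rw [Finset.card_biUnion]
    · have hterm : ∀ M' ∈ (matchings Q₁ Q₂).filter (fun M => M.image Prod.fst = T₁),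
          ((Q₂ \ M'.image Prod.snd).image (fun C₂ => insert (C₁, C₂) M')).card
            = Q₂.card - T₁.card := by
        intro M' hM'
        obtain ⟨hM'm, himg'⟩ := Finset.mem_filter.mp hM'
        have hinj : Set.InjOn (fun C₂ => insert (C₁, C₂) M') ↑(Q₂ \ M'.image Prod.snd) := by
          intro x hx y hy h
          simp only [Finset.coe_sdiff, Set.mem_diff, Finset.mem_coe, Finset.mem_image] at hx hy
          have h' : insert (C₁, x) M' = insert (C₁, y) M' := h
          have hxmem : (C₁, x) ∈ insert (C₁, y) M' := by
            rw [← h']; exact Finset.mem_insert_self _ _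
          rcases Finset.mem_insert.mp hxmem with h' | h'
          · exact congrArg Prod.snd h'
          · exfalso
            apply hC₁
            rw [← himg']
            exact Finset.mem_image.mpr ⟨(C₁, x), h', rfl⟩
        rw [Finset.card_image_of_injOn hinj, Finset.card_sdiff_of_subset]
        · rw [card_image_snd hM'm, ← card_image_fst hM'm, himg']
        · intro y hy
          obtain ⟨q, hq, rfl⟩ := Finset.mem_image.mp hy
          exact (Finset.mem_product.mp ((mem_matchings.mp hM'm).1 hq)).2
      rw [Finset.sum_congr rfl hterm, Finset.sum_const, ih hTQ,
        Finset.card_insert_of_notMem hC₁, Nat.descFactorial_succ, smul_eq_mul,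
        Nat.mul_comm]
    · -- pairwise disjointness of the biUnion
      intro M₁ hM₁ M₂ hM₂ hne
      simp only [Finset.mem_coe, Finset.mem_filter] at hM₁ hM₂
      rw [Function.onFun, Finset.disjoint_left]
      intro M hMa hMb
      obtain ⟨x, hx, hxe⟩ := Finset.mem_image.mp hMa
      obtain ⟨y, hy, hye⟩ := Finset.mem_image.mp hMb
      apply hne
      have key : ∀ (M' : Finset (β × γ)) (C₂ : γ), M'.image Prod.fst = T₁ →
          (insert (C₁, C₂) M').filter (fun p => p.1 ≠ C₁) = M' := by
        intro M' C₂ himg'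
        ext q
        simp only [Finset.mem_filter, Finset.mem_insert]
        constructor
        · rintro ⟨h | h, hq1⟩
          · exact absurd (congrArg Prod.fst h) hq1
          · exact h
        · intro hq
          refine ⟨Or.inr hq, ?_⟩
          intro h
          exact hC₁ (himg' ▸ Finset.mem_image.mpr ⟨q, hq, h⟩)
      have hxe' : insert (C₁, x) M₁ = M := hxe
      have hye' : insert (C₁, y) M₂ = M := hye
      have hx2 := key M₁ x hM₁.2
      have hy2 := key M₂ y hM₂.2
      rw [← hx2, ← hy2, hxe', hye']

section
variable {β γ : Type*} [DecidableEq β] [DecidableEq γ]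

lemma sum_matchings (Q₁ : Finset β) (Q₂ : Finset γ) (f : ℕ → ℂ) :
    ∑ M ∈ matchings Q₁ Q₂, f M.card
      = ∑ m ∈ Finset.range (Q₁.card + 1),
          (Q₁.card.choose m : ℂ) * (Q₂.card.descFactorial m : ℂ) * f m := by
  have hmaps : ∀ M ∈ matchings Q₁ Q₂, M.image Prod.fst ∈ Q₁.powerset := by
    intro M hM
    rw [Finset.mem_powerset]
    intro x hx
    obtain ⟨p, hp, rfl⟩ := Finset.mem_image.mp hx
    exact (Finset.mem_product.mp ((mem_matchings.mp hM).1 hp)).1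
  rw [← Finset.sum_fiberwise_of_maps_to hmaps (fun M => f M.card)]
  have hinner : ∀ T₁ ∈ Q₁.powerset,
      ∑ M ∈ (matchings Q₁ Q₂).filter (fun M => M.image Prod.fst = T₁), f M.card
        = (Q₂.card.descFactorial T₁.card : ℂ) * f T₁.card := by
    intro T₁ hT₁
    have : ∀ M ∈ (matchings Q₁ Q₂).filter (fun M => M.image Prod.fst = T₁),
        f M.card = f T₁.card := by
      intro M hM
      obtain ⟨hMm, himg⟩ := Finset.mem_filter.mp hM
      rw [← card_image_fst hMm, himg]
    rw [Finset.sum_congr rfl this, Finset.sum_const,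
      card_matchings_fiber Q₁ Q₂ T₁ (Finset.mem_powerset.mp hT₁), nsmul_eq_mul]
  rw [Finset.sum_congr rfl hinner]
  have := Finset.sum_powerset_apply_card
    (f := fun m => (Q₂.card.descFactorial m : ℂ) * f m) (x := Q₁)
  rw [this]
  apply Finset.sum_congr rfl
  intro m _
  rw [nsmul_eq_mul]
  ring

end

section Core
variable {α : Type*} [DecidableEq α] [Fintype α]

/-- The restriction of a partition of `univ` to `S`: nonempty traces of parts on `S`. -/
def resPart (S : Finset α) (P : Finpartition (Finset.univ : Finset α)) :
    Finset (Finset α) :=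
  (P.parts.image (· ∩ S)).erase ∅

lemma mem_resPart {S : Finset α} {P : Finpartition (Finset.univ : Finset α)}
    {C : Finset α} :
    C ∈ resPart S P ↔ C ≠ ∅ ∧ ∃ B ∈ P.parts, B ∩ S = C := by
  simp [resPart, and_comm]

lemma part_eq {P : Finpartition (Finset.univ : Finset α)} {B B' : Finset α}
    (hB : B ∈ P.parts) (hB' : B' ∈ P.parts) {x : α} (hx : x ∈ B) (hx' : x ∈ B') :
    B = B' := by
  by_contra hne
  exact Finset.disjoint_left.mp (P.disjoint hB hB' hne) hx hx'

/-- The parts of the partition associated to a matching. -/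
def mParts (Q₁ Q₂ : Finset (Finset α)) (M : Finset (Finset α × Finset α)) :
    Finset (Finset α) :=
  M.image (fun p => p.1 ∪ p.2) ∪ ((Q₁ \ M.image Prod.fst) ∪ (Q₂ \ M.image Prod.snd))

lemma mem_mParts {Q₁ Q₂ : Finset (Finset α)} {M : Finset (Finset α × Finset α)}
    {D : Finset α} :
    D ∈ mParts Q₁ Q₂ M ↔ (∃ p ∈ M, p.1 ∪ p.2 = D) ∨
      (D ∈ Q₁ ∧ D ∉ M.image Prod.fst) ∨ (D ∈ Q₂ ∧ D ∉ M.image Prod.snd) := by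
  simp [mParts]

variable {S₁ S₂ : Finset α} {Q₁ Q₂ : Finset (Finset α)}

lemma union_inter_left (hdisj : Disjoint S₁ S₂) {C₁ C₂ : Finset α}
    (h₁ : C₁ ⊆ S₁) (h₂ : C₂ ⊆ S₂) : (C₁ ∪ C₂) ∩ S₁ = C₁ := by
  ext x
  simp only [Finset.mem_inter, Finset.mem_union]
  constructor
  · rintro ⟨h | h, hx⟩
    · exact h
    · exact absurd hx (Finset.disjoint_right.mp hdisj (h₂ h))
  · intro h; exact ⟨Or.inl h, h₁ h⟩

lemma union_inter_right (hdisj : Disjoint S₁ S₂) {C₁ C₂ : Finset α}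
    (h₁ : C₁ ⊆ S₁) (h₂ : C₂ ⊆ S₂) : (C₁ ∪ C₂) ∩ S₂ = C₂ := by
  ext x
  simp only [Finset.mem_inter, Finset.mem_union]
  constructor
  · rintro ⟨h | h, hx⟩
    · exact absurd hx (Finset.disjoint_left.mp hdisj (h₁ h))
    · exact h
  · intro h; exact ⟨Or.inr h, h₂ h⟩

end Core

section Core2
variable {α : Type*} [DecidableEq α] [Fintype α]
variable {S₁ S₂ : Finset α} {Q₁ Q₂ : Finset (Finset α)}
variable {M : Finset (Finset α × Finset α)}

lemma trace₁ (hdisj : Disjoint S₁ S₂)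
    (hsub₂ : ∀ C ∈ Q₂, C ⊆ S₂)
    (hM : M ∈ matchings Q₁ Q₂) {D : Finset α} (hD : D ∈ mParts Q₁ Q₂ M)
    {x : α} (hx : x ∈ D) (hxS : x ∈ S₁) :
    ∃ C₁ ∈ Q₁, x ∈ C₁ ∧
      ((C₁ ∉ M.image Prod.fst ∧ D = C₁) ∨ ∃ C₂, (C₁, C₂) ∈ M ∧ D = C₁ ∪ C₂) := by
  obtain ⟨hMsub, hmatch⟩ := mem_matchings.mp hM
  rcases mem_mParts.mp hD with ⟨p, hp, rfl⟩ | ⟨hDQ, hDim⟩ | ⟨hDQ, hDim⟩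
  · have hp1 : p.1 ∈ Q₁ := (Finset.mem_product.mp (hMsub hp)).1
    have hp2 : p.2 ∈ Q₂ := (Finset.mem_product.mp (hMsub hp)).2
    have hx1 : x ∈ p.1 := by
      rcases Finset.mem_union.mp hx with h | h
      · exact h
      · exact absurd hxS (Finset.disjoint_right.mp hdisj (hsub₂ _ hp2 h))
    exact ⟨p.1, hp1, hx1, Or.inr ⟨p.2, by simpa using hp, rfl⟩⟩
  · exact ⟨D, hDQ, hx, Or.inl ⟨hDim, rfl⟩⟩
  · exact absurd hxS (Finset.disjoint_right.mp hdisj (hsub₂ _ hDQ hx))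

lemma trace₂ (hdisj : Disjoint S₁ S₂)
    (hsub₁ : ∀ C ∈ Q₁, C ⊆ S₁)
    (hM : M ∈ matchings Q₁ Q₂) {D : Finset α} (hD : D ∈ mParts Q₁ Q₂ M)
    {x : α} (hx : x ∈ D) (hxS : x ∈ S₂) :
    ∃ C₂ ∈ Q₂, x ∈ C₂ ∧
      ((C₂ ∉ M.image Prod.snd ∧ D = C₂) ∨ ∃ C₁, (C₁, C₂) ∈ M ∧ D = C₁ ∪ C₂) := by
  obtain ⟨hMsub, hmatch⟩ := mem_matchings.mp hM
  rcases mem_mParts.mp hD with ⟨p, hp, rfl⟩ | ⟨hDQ, hDim⟩ | ⟨hDQ, hDim⟩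
  · have hp1 : p.1 ∈ Q₁ := (Finset.mem_product.mp (hMsub hp)).1
    have hp2 : p.2 ∈ Q₂ := (Finset.mem_product.mp (hMsub hp)).2
    have hx2 : x ∈ p.2 := by
      rcases Finset.mem_union.mp hx with h | h
      · exact absurd hxS (Finset.disjoint_left.mp hdisj (hsub₁ _ hp1 h))
      · exact h
    exact ⟨p.2, hp2, hx2, Or.inr ⟨p.1, by simpa using hp, rfl⟩⟩
  · exact absurd hxS (Finset.disjoint_left.mp hdisj (hsub₁ _ hDQ hx))
  · exact ⟨D, hDQ, hx, Or.inl ⟨hDim, rfl⟩⟩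

lemma mParts_inj (hdisj : Disjoint S₁ S₂) (hunion : S₁ ∪ S₂ = Finset.univ)
    (hsub₁ : ∀ C ∈ Q₁, C ⊆ S₁)
    (hpd₁ : ∀ C ∈ Q₁, ∀ C' ∈ Q₁, C ≠ C' → Disjoint C C')
    (hsub₂ : ∀ C ∈ Q₂, C ⊆ S₂)
    (hpd₂ : ∀ C ∈ Q₂, ∀ C' ∈ Q₂, C ≠ C' → Disjoint C C')
    (hM : M ∈ matchings Q₁ Q₂) :
    ∀ D ∈ mParts Q₁ Q₂ M, ∀ D' ∈ mParts Q₁ Q₂ M, ∀ x, x ∈ D → x ∈ D' → D = D' := by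
  obtain ⟨hMsub, hmatch⟩ := mem_matchings.mp hM
  intro D hD D' hD' x hx hx'
  have hxu : x ∈ S₁ ∪ S₂ := by rw [hunion]; exact Finset.mem_univ x
  rcases Finset.mem_union.mp hxu with hxS | hxS
  · obtain ⟨C₁, hC₁, hxC₁, hcase⟩ := trace₁ hdisj hsub₂ hM hD hx hxS
    obtain ⟨C₁', hC₁', hxC₁', hcase'⟩ := trace₁ hdisj hsub₂ hM hD' hx' hxS
    have heq : C₁ = C₁' := by
      by_contra hne
      exact Finset.disjoint_left.mp (hpd₁ _ hC₁ _ hC₁' hne) hxC₁ hxC₁'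
    subst heq
    rcases hcase with ⟨him, hDeq⟩ | ⟨C₂, hmem, hDeq⟩ <;>
      rcases hcase' with ⟨him', hDeq'⟩ | ⟨C₂', hmem', hDeq'⟩
    · rw [hDeq, hDeq']
    · exact absurd (Finset.mem_image.mpr ⟨(C₁, C₂'), hmem', rfl⟩) him
    · exact absurd (Finset.mem_image.mpr ⟨(C₁, C₂), hmem, rfl⟩) him'
    · have h2 : C₂ = C₂' := congrArg Prod.snd (hmatch _ hmem _ hmem' (Or.inl rfl))
      rw [hDeq, hDeq', h2]
  · obtain ⟨C₂, hC₂, hxC₂, hcase⟩ := trace₂ hdisj hsub₁ hM hD hx hxS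
    obtain ⟨C₂', hC₂', hxC₂', hcase'⟩ := trace₂ hdisj hsub₁ hM hD' hx' hxS
    have heq : C₂ = C₂' := by
      by_contra hne
      exact Finset.disjoint_left.mp (hpd₂ _ hC₂ _ hC₂' hne) hxC₂ hxC₂'
    subst heq
    rcases hcase with ⟨him, hDeq⟩ | ⟨C₁, hmem, hDeq⟩ <;>
      rcases hcase' with ⟨him', hDeq'⟩ | ⟨C₁', hmem', hDeq'⟩
    · rw [hDeq, hDeq']
    · exact absurd (Finset.mem_image.mpr ⟨(C₁', C₂), hmem', rfl⟩) him
    · exact absurd (Finset.mem_image.mpr ⟨(C₁, C₂), hmem, rfl⟩) him'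
    · have h1 : C₁ = C₁' := congrArg Prod.fst (hmatch _ hmem _ hmem' (Or.inr rfl))
      rw [hDeq, hDeq', h1]

lemma mParts_cover (hunion : S₁ ∪ S₂ = Finset.univ)
    (hcov₁ : ∀ x ∈ S₁, ∃ C ∈ Q₁, x ∈ C) (hcov₂ : ∀ x ∈ S₂, ∃ C ∈ Q₂, x ∈ C) :
    ∀ x : α, ∃ D ∈ mParts Q₁ Q₂ M, x ∈ D := by
  intro x
  have hxu : x ∈ S₁ ∪ S₂ := by rw [hunion]; exact Finset.mem_univ x
  rcases Finset.mem_union.mp hxu with hxS | hxS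
  · obtain ⟨C, hC, hxC⟩ := hcov₁ x hxS
    by_cases hIm : C ∈ M.image Prod.fst
    · obtain ⟨p, hp, hp1⟩ := Finset.mem_image.mp hIm
      refine ⟨p.1 ∪ p.2, mem_mParts.mpr (Or.inl ⟨p, hp, rfl⟩), ?_⟩
      rw [hp1]
      exact Finset.mem_union_left _ hxC
    · exact ⟨C, mem_mParts.mpr (Or.inr (Or.inl ⟨hC, hIm⟩)), hxC⟩
  · obtain ⟨C, hC, hxC⟩ := hcov₂ x hxS
    by_cases hIm : C ∈ M.image Prod.snd
    · obtain ⟨p, hp, hp2⟩ := Finset.mem_image.mp hIm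
      refine ⟨p.1 ∪ p.2, mem_mParts.mpr (Or.inl ⟨p, hp, rfl⟩), ?_⟩
      rw [hp2]
      exact Finset.mem_union_right _ hxC
    · exact ⟨C, mem_mParts.mpr (Or.inr (Or.inr ⟨hC, hIm⟩)), hxC⟩

lemma mParts_nonempty (hne₁ : ∀ C ∈ Q₁, C.Nonempty) (hne₂ : ∀ C ∈ Q₂, C.Nonempty)
    (hM : M ∈ matchings Q₁ Q₂) :
    ∀ D ∈ mParts Q₁ Q₂ M, D.Nonempty := by
  obtain ⟨hMsub, hmatch⟩ := mem_matchings.mp hM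
  intro D hD
  rcases mem_mParts.mp hD with ⟨p, hp, rfl⟩ | ⟨hDQ, -⟩ | ⟨hDQ, -⟩
  · obtain ⟨y, hy⟩ := hne₁ _ (Finset.mem_product.mp (hMsub hp)).1
    exact ⟨y, Finset.mem_union_left _ hy⟩
  · exact hne₁ _ hDQ
  · exact hne₂ _ hDQ

/-- The partition of `univ` associated to a matching between `Q₁` and `Q₂`. -/
def mPartition (hdisj : Disjoint S₁ S₂) (hunion : S₁ ∪ S₂ = Finset.univ)
    (hne₁ : ∀ C ∈ Q₁, C.Nonempty) (hsub₁ : ∀ C ∈ Q₁, C ⊆ S₁)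
    (hpd₁ : ∀ C ∈ Q₁, ∀ C' ∈ Q₁, C ≠ C' → Disjoint C C')
    (hcov₁ : ∀ x ∈ S₁, ∃ C ∈ Q₁, x ∈ C)
    (hne₂ : ∀ C ∈ Q₂, C.Nonempty) (hsub₂ : ∀ C ∈ Q₂, C ⊆ S₂)
    (hpd₂ : ∀ C ∈ Q₂, ∀ C' ∈ Q₂, C ≠ C' → Disjoint C C')
    (hcov₂ : ∀ x ∈ S₂, ∃ C ∈ Q₂, x ∈ C)
    (M : Finset (Finset α × Finset α)) (hM : M ∈ matchings Q₁ Q₂) :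
    Finpartition (Finset.univ : Finset α) where
  parts := mParts Q₁ Q₂ M
  supIndep := by
    rw [Finset.supIndep_iff_pairwiseDisjoint]
    intro D hD D' hD' hne
    simp only [Function.onFun, id_eq]
    rw [Finset.disjoint_left]
    intro x hx hx'
    exact hne (mParts_inj hdisj hunion hsub₁ hpd₁ hsub₂ hpd₂ hM D
      (Finset.mem_coe.mp hD) D' (Finset.mem_coe.mp hD') x hx hx')
  sup_parts := by
    apply le_antisymm
    · exact Finset.sup_le fun D _ => Finset.subset_univ D
    · intro x _
      obtain ⟨D, hD, hxD⟩ := mParts_cover hunion hcov₁ hcov₂ (M := M) x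
      exact Finset.mem_sup.mpr ⟨D, hD, hxD⟩
  bot_notMem := by
    intro h
    obtain ⟨y, hy⟩ := mParts_nonempty hne₁ hne₂ hM _ h
    exact absurd hy (Finset.notMem_empty y)

lemma card_mParts (hdisj : Disjoint S₁ S₂)
    (hne₁ : ∀ C ∈ Q₁, C.Nonempty) (hsub₁ : ∀ C ∈ Q₁, C ⊆ S₁)
    (hne₂ : ∀ C ∈ Q₂, C.Nonempty) (hsub₂ : ∀ C ∈ Q₂, C ⊆ S₂)
    (hM : M ∈ matchings Q₁ Q₂) :
    (mParts Q₁ Q₂ M).card + M.card = Q₁.card + Q₂.card := by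
  obtain ⟨hMsub, hmatch⟩ := mem_matchings.mp hM
  have hfstQ : M.image Prod.fst ⊆ Q₁ := by
    intro C hC; obtain ⟨p, hp, rfl⟩ := Finset.mem_image.mp hC
    exact (Finset.mem_product.mp (hMsub hp)).1
  have hsndQ : M.image Prod.snd ⊆ Q₂ := by
    intro C hC; obtain ⟨p, hp, rfl⟩ := Finset.mem_image.mp hC
    exact (Finset.mem_product.mp (hMsub hp)).2
  have hd23 : Disjoint (Q₁ \ M.image Prod.fst) (Q₂ \ M.image Prod.snd) := by
    rw [Finset.disjoint_left]
    rintro D hD hD'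
    obtain ⟨y, hy⟩ := hne₁ _ (Finset.mem_sdiff.mp hD).1
    exact Finset.disjoint_left.mp hdisj (hsub₁ _ (Finset.mem_sdiff.mp hD).1 hy)
      (hsub₂ _ (Finset.mem_sdiff.mp hD').1 hy)
  have hd123 : Disjoint (M.image (fun p => p.1 ∪ p.2))
      ((Q₁ \ M.image Prod.fst) ∪ (Q₂ \ M.image Prod.snd)) := by
    rw [Finset.disjoint_left]
    rintro D hD hD'
    obtain ⟨p, hp, rfl⟩ := Finset.mem_image.mp hD
    have hp1 : p.1 ∈ Q₁ := (Finset.mem_product.mp (hMsub hp)).1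
    have hp2 : p.2 ∈ Q₂ := (Finset.mem_product.mp (hMsub hp)).2
    rcases Finset.mem_union.mp hD' with h | h
    · obtain ⟨y, hy⟩ := hne₂ _ hp2
      have hyS₂ : y ∈ S₂ := hsub₂ _ hp2 hy
      have hyS₁ : y ∈ S₁ := hsub₁ _ (Finset.mem_sdiff.mp h).1 (Finset.mem_union_right _ hy)
      exact Finset.disjoint_left.mp hdisj hyS₁ hyS₂
    · obtain ⟨y, hy⟩ := hne₁ _ hp1
      have hyS₁ : y ∈ S₁ := hsub₁ _ hp1 hy
      have hyS₂ : y ∈ S₂ := hsub₂ _ (Finset.mem_sdiff.mp h).1 (Finset.mem_union_left _ hy)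
      exact Finset.disjoint_left.mp hdisj hyS₁ hyS₂
  have hcard1 : (M.image (fun p => p.1 ∪ p.2)).card = M.card := by
    apply Finset.card_image_of_injOn
    intro p hp q hq h
    have hp1 : p.1 ⊆ S₁ := hsub₁ _ (Finset.mem_product.mp (hMsub hp)).1
    have hp2 : p.2 ⊆ S₂ := hsub₂ _ (Finset.mem_product.mp (hMsub hp)).2
    have hq1 : q.1 ⊆ S₁ := hsub₁ _ (Finset.mem_product.mp (hMsub hq)).1
    have hq2 : q.2 ⊆ S₂ := hsub₂ _ (Finset.mem_product.mp (hMsub hq)).2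
    have h' : p.1 ∪ p.2 = q.1 ∪ q.2 := h
    have e1 : p.1 = q.1 := by
      rw [← union_inter_left hdisj hp1 hp2, ← union_inter_left hdisj hq1 hq2, h']
    exact hmatch p hp q hq (Or.inl e1)
  have hle1 : M.card ≤ Q₁.card := by
    rw [← card_image_fst hM]; exact Finset.card_le_card hfstQ
  have hle2 : M.card ≤ Q₂.card := by
    rw [← card_image_snd hM]; exact Finset.card_le_card hsndQ
  rw [mParts, Finset.card_union_of_disjoint hd123, Finset.card_union_of_disjoint hd23,
    hcard1, Finset.card_sdiff_of_subset hfstQ, Finset.card_sdiff_of_subset hsndQ,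
    card_image_fst hM, card_image_snd hM]
  omega

end Core2

section Core3
variable {α : Type*} [DecidableEq α] [Fintype α]
variable {S₁ S₂ : Finset α} {Q₁ Q₂ : Finset (Finset α)}
variable {M : Finset (Finset α × Finset α)}

/-- The matching associated to a partition: pairs of `Q₁ × Q₂` whose union is a part. -/
def pMatch (Q₁ Q₂ : Finset (Finset α)) (P : Finpartition (Finset.univ : Finset α)) :
    Finset (Finset α × Finset α) :=
  (Q₁ ×ˢ Q₂).filter (fun p => p.1 ∪ p.2 ∈ P.parts)

lemma pMatch_mem_matchings (hdisj : Disjoint S₁ S₂)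
    (hne₁ : ∀ C ∈ Q₁, C.Nonempty) (hsub₁ : ∀ C ∈ Q₁, C ⊆ S₁)
    (hne₂ : ∀ C ∈ Q₂, C.Nonempty) (hsub₂ : ∀ C ∈ Q₂, C ⊆ S₂)
    (P : Finpartition (Finset.univ : Finset α)) :
    pMatch Q₁ Q₂ P ∈ matchings Q₁ Q₂ := by
  refine mem_matchings.mpr ⟨Finset.filter_subset _ _, ?_⟩
  intro p hp q hq h
  obtain ⟨hpQ, hppart⟩ := Finset.mem_filter.mp hp
  obtain ⟨hqQ, hqpart⟩ := Finset.mem_filter.mp hq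
  have hp1 : p.1 ⊆ S₁ := hsub₁ _ (Finset.mem_product.mp hpQ).1
  have hp2 : p.2 ⊆ S₂ := hsub₂ _ (Finset.mem_product.mp hpQ).2
  have hq1 : q.1 ⊆ S₁ := hsub₁ _ (Finset.mem_product.mp hqQ).1
  have hq2 : q.2 ⊆ S₂ := hsub₂ _ (Finset.mem_product.mp hqQ).2
  have hU : p.1 ∪ p.2 = q.1 ∪ q.2 := by
    rcases h with h | h
    · obtain ⟨y, hy⟩ := hne₁ _ (Finset.mem_product.mp hpQ).1
      exact part_eq hppart hqpart (Finset.mem_union_left _ hy)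
        (Finset.mem_union_left _ (h ▸ hy))
    · obtain ⟨y, hy⟩ := hne₂ _ (Finset.mem_product.mp hpQ).2
      exact part_eq hppart hqpart (Finset.mem_union_right _ hy)
        (Finset.mem_union_right _ (h ▸ hy))
  have e1 : p.1 = q.1 := by
    rw [← union_inter_left hdisj hp1 hp2, ← union_inter_left hdisj hq1 hq2, hU]
  have e2 : p.2 = q.2 := by
    rw [← union_inter_right hdisj hp1 hp2, ← union_inter_right hdisj hq1 hq2, hU]
  exact Prod.ext e1 e2

lemma pMatch_mParts (hdisj : Disjoint S₁ S₂)
    (hne₁ : ∀ C ∈ Q₁, C.Nonempty) (hsub₁ : ∀ C ∈ Q₁, C ⊆ S₁)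
    (hne₂ : ∀ C ∈ Q₂, C.Nonempty) (hsub₂ : ∀ C ∈ Q₂, C ⊆ S₂)
    (hM : M ∈ matchings Q₁ Q₂)
    (P : Finpartition (Finset.univ : Finset α)) (hP : P.parts = mParts Q₁ Q₂ M) :
    pMatch Q₁ Q₂ P = M := by
  obtain ⟨hMsub, hmatch⟩ := mem_matchings.mp hM
  ext p
  simp only [pMatch, Finset.mem_filter, hP]
  constructor
  · rintro ⟨hpQ, hpart⟩
    have hp1Q : p.1 ∈ Q₁ := (Finset.mem_product.mp hpQ).1
    have hp2Q : p.2 ∈ Q₂ := (Finset.mem_product.mp hpQ).2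
    rcases mem_mParts.mp hpart with ⟨q, hq, hUq⟩ | ⟨hDQ, -⟩ | ⟨hDQ, -⟩
    · have hq1 : q.1 ⊆ S₁ := hsub₁ _ (Finset.mem_product.mp (hMsub hq)).1
      have hq2 : q.2 ⊆ S₂ := hsub₂ _ (Finset.mem_product.mp (hMsub hq)).2
      have e1 : q.1 = p.1 := by
        rw [← union_inter_left hdisj hq1 hq2, hUq,
          union_inter_left hdisj (hsub₁ _ hp1Q) (hsub₂ _ hp2Q)]
      have e2 : q.2 = p.2 := by
        rw [← union_inter_right hdisj hq1 hq2, hUq,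
          union_inter_right hdisj (hsub₁ _ hp1Q) (hsub₂ _ hp2Q)]
      have : q = p := Prod.ext e1 e2
      rwa [← this]
    · obtain ⟨y, hy⟩ := hne₂ _ hp2Q
      have : y ∈ S₁ := hsub₁ _ hDQ (Finset.mem_union_right _ hy)
      exact absurd this (Finset.disjoint_right.mp hdisj (hsub₂ _ hp2Q hy))
    · obtain ⟨y, hy⟩ := hne₁ _ hp1Q
      have : y ∈ S₂ := hsub₂ _ hDQ (Finset.mem_union_left _ hy)
      exact absurd this (Finset.disjoint_left.mp hdisj (hsub₁ _ hp1Q hy))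
  · intro hpM
    exact ⟨hMsub hpM, mem_mParts.mpr (Or.inl ⟨p, hpM, rfl⟩)⟩

lemma resPart_eq_of_parts (hdisj : Disjoint S₁ S₂)
    (hne₁ : ∀ C ∈ Q₁, C.Nonempty) (hsub₁ : ∀ C ∈ Q₁, C ⊆ S₁)
    (hne₂ : ∀ C ∈ Q₂, C.Nonempty) (hsub₂ : ∀ C ∈ Q₂, C ⊆ S₂)
    (hM : M ∈ matchings Q₁ Q₂)
    (P : Finpartition (Finset.univ : Finset α)) (hP : P.parts = mParts Q₁ Q₂ M) :
    resPart S₁ P = Q₁ ∧ resPart S₂ P = Q₂ := by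
  obtain ⟨hMsub, hmatch⟩ := mem_matchings.mp hM
  constructor
  · ext C
    rw [mem_resPart, hP]
    constructor
    · rintro ⟨hCne, B, hB, rfl⟩
      rcases mem_mParts.mp hB with ⟨p, hp, rfl⟩ | ⟨hDQ, -⟩ | ⟨hDQ, -⟩
      · rw [union_inter_left hdisj (hsub₁ _ (Finset.mem_product.mp (hMsub hp)).1)
          (hsub₂ _ (Finset.mem_product.mp (hMsub hp)).2)]
        exact (Finset.mem_product.mp (hMsub hp)).1
      · rwa [Finset.inter_eq_left.mpr (hsub₁ _ hDQ)]
      · exact absurd (Finset.disjoint_iff_inter_eq_empty.mp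
          (Finset.disjoint_of_subset_left (hsub₂ _ hDQ) hdisj.symm)) hCne
    · intro hC
      by_cases hIm : C ∈ M.image Prod.fst
      · obtain ⟨p, hp, rfl⟩ := Finset.mem_image.mp hIm
        refine ⟨(hne₁ _ hC).ne_empty, p.1 ∪ p.2, mem_mParts.mpr (Or.inl ⟨p, hp, rfl⟩), ?_⟩
        exact union_inter_left hdisj (hsub₁ _ (Finset.mem_product.mp (hMsub hp)).1)
          (hsub₂ _ (Finset.mem_product.mp (hMsub hp)).2)
      · exact ⟨(hne₁ _ hC).ne_empty, C, mem_mParts.mpr (Or.inr (Or.inl ⟨hC, hIm⟩)),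
          Finset.inter_eq_left.mpr (hsub₁ _ hC)⟩
  · ext C
    rw [mem_resPart, hP]
    constructor
    · rintro ⟨hCne, B, hB, rfl⟩
      rcases mem_mParts.mp hB with ⟨p, hp, rfl⟩ | ⟨hDQ, -⟩ | ⟨hDQ, -⟩
      · rw [union_inter_right hdisj (hsub₁ _ (Finset.mem_product.mp (hMsub hp)).1)
          (hsub₂ _ (Finset.mem_product.mp (hMsub hp)).2)]
        exact (Finset.mem_product.mp (hMsub hp)).2
      · exact absurd (Finset.disjoint_iff_inter_eq_empty.mp
          (Finset.disjoint_of_subset_left (hsub₁ _ hDQ) hdisj)) hCne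
      · rwa [Finset.inter_eq_left.mpr (hsub₂ _ hDQ)]
    · intro hC
      by_cases hIm : C ∈ M.image Prod.snd
      · obtain ⟨p, hp, rfl⟩ := Finset.mem_image.mp hIm
        refine ⟨(hne₂ _ hC).ne_empty, p.1 ∪ p.2, mem_mParts.mpr (Or.inl ⟨p, hp, rfl⟩), ?_⟩
        exact union_inter_right hdisj (hsub₁ _ (Finset.mem_product.mp (hMsub hp)).1)
          (hsub₂ _ (Finset.mem_product.mp (hMsub hp)).2)
      · exact ⟨(hne₂ _ hC).ne_empty, C, mem_mParts.mpr (Or.inr (Or.inr ⟨hC, hIm⟩)),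
          Finset.inter_eq_left.mpr (hsub₂ _ hC)⟩

lemma mParts_pMatch (hdisj : Disjoint S₁ S₂) (hunion : S₁ ∪ S₂ = Finset.univ)
    (hne₂ : ∀ C ∈ Q₂, C.Nonempty) (hsub₁ : ∀ C ∈ Q₁, C ⊆ S₁)
    (hsub₂ : ∀ C ∈ Q₂, C ⊆ S₂)
    (P : Finpartition (Finset.univ : Finset α))
    (hr₁ : resPart S₁ P = Q₁) (hr₂ : resPart S₂ P = Q₂) :
    mParts Q₁ Q₂ (pMatch Q₁ Q₂ P) = P.parts := by
  have hBu : ∀ B ∈ P.parts, (B ∩ S₁) ∪ (B ∩ S₂) = B := by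
    intro B hB
    rw [← Finset.inter_union_distrib_left, hunion, Finset.inter_univ]
  ext D
  constructor
  · intro hD
    rcases mem_mParts.mp hD with ⟨p, hp, rfl⟩ | ⟨hDQ, hDim⟩ | ⟨hDQ, hDim⟩
    · exact (Finset.mem_filter.mp hp).2
    · -- D ∈ Q₁ unmatched: show D ∈ P.parts
      obtain ⟨hDne, B, hB, hBD⟩ := mem_resPart.mp (hr₁ ▸ hDQ)
      have hBS₂ : B ∩ S₂ = ∅ := by
        by_contra hne
        have hBS₂Q : B ∩ S₂ ∈ Q₂ := hr₂ ▸ mem_resPart.mpr ⟨hne, B, hB, rfl⟩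
        apply hDim
        refine Finset.mem_image.mpr ⟨(D, B ∩ S₂), ?_, rfl⟩
        refine Finset.mem_filter.mpr ⟨Finset.mem_product.mpr ⟨hDQ, hBS₂Q⟩, ?_⟩
        have : D ∪ B ∩ S₂ = B := by rw [← hBD]; exact hBu B hB
        rwa [this]
      have hDB : D = B := by
        conv_rhs => rw [← hBu B hB]
        rw [hBS₂, Finset.union_empty, hBD]
      rwa [hDB]
    · obtain ⟨hDne, B, hB, hBD⟩ := mem_resPart.mp (hr₂ ▸ hDQ)
      have hBS₁ : B ∩ S₁ = ∅ := by
        by_contra hne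
        have hBS₁Q : B ∩ S₁ ∈ Q₁ := hr₁ ▸ mem_resPart.mpr ⟨hne, B, hB, rfl⟩
        apply hDim
        refine Finset.mem_image.mpr ⟨(B ∩ S₁, D), ?_, rfl⟩
        refine Finset.mem_filter.mpr ⟨Finset.mem_product.mpr ⟨hBS₁Q, hDQ⟩, ?_⟩
        have : B ∩ S₁ ∪ D = B := by rw [← hBD]; exact hBu B hB
        rwa [this]
      have hDB : D = B := by
        conv_rhs => rw [← hBu B hB]
        rw [hBS₁, Finset.empty_union, hBD]
      rwa [hDB]
  · intro hB
    have hBne : D ≠ ∅ := by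
      have := P.ne_bot hB
      simpa using this
    have key₂ : D ∩ S₁ = ∅ → D ∩ S₂ ≠ ∅ → D ∉ (pMatch Q₁ Q₂ P).image Prod.snd := by
      intro h1 _ hIm
      obtain ⟨p, hp, hp2⟩ := Finset.mem_image.mp hIm
      obtain ⟨hpQ, hppart⟩ := Finset.mem_filter.mp hp
      obtain ⟨hp1ne, -, -, -⟩ := mem_resPart.mp (hr₁ ▸ (Finset.mem_product.mp hpQ).1)
      obtain ⟨y, hy⟩ := Finset.nonempty_iff_ne_empty.mpr hp1ne
      obtain ⟨z, hz⟩ := Finset.nonempty_iff_ne_empty.mpr hBne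
      have hsame : p.1 ∪ p.2 = D := by
        refine part_eq hppart hB ?_ hz
        rw [hp2]
        exact Finset.mem_union_right _ hz
      have hyD : y ∈ D ∩ S₁ := by
        rw [← hsame]
        exact Finset.mem_inter.mpr ⟨Finset.mem_union_left _ hy,
          hsub₁ _ (Finset.mem_product.mp hpQ).1 hy⟩
      rw [h1] at hyD
      exact absurd hyD (Finset.notMem_empty y)
    have key₁ : D ∩ S₂ = ∅ → D ∩ S₁ ≠ ∅ → D ∉ (pMatch Q₁ Q₂ P).image Prod.fst := by
      intro h2 _ hIm
      obtain ⟨p, hp, hp1⟩ := Finset.mem_image.mp hIm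
      obtain ⟨hpQ, hppart⟩ := Finset.mem_filter.mp hp
      obtain ⟨hp2ne, -, -, -⟩ := mem_resPart.mp (hr₂ ▸ (Finset.mem_product.mp hpQ).2)
      obtain ⟨y, hy⟩ := Finset.nonempty_iff_ne_empty.mpr hp2ne
      obtain ⟨z, hz⟩ := Finset.nonempty_iff_ne_empty.mpr hBne
      have hsame : p.1 ∪ p.2 = D := by
        refine part_eq hppart hB ?_ hz
        rw [hp1]
        exact Finset.mem_union_left _ hz
      have hyD : y ∈ D ∩ S₂ := by
        rw [← hsame]
        exact Finset.mem_inter.mpr ⟨Finset.mem_union_right _ hy,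
          hsub₂ _ (Finset.mem_product.mp hpQ).2 hy⟩
      rw [h2] at hyD
      exact absurd hyD (Finset.notMem_empty y)
    by_cases h1 : D ∩ S₁ = ∅ <;> by_cases h2 : D ∩ S₂ = ∅
    · exfalso
      apply hBne
      rw [← hBu D hB, h1, h2, Finset.union_empty]
    · have hDQ₂ : D ∩ S₂ ∈ Q₂ := hr₂ ▸ mem_resPart.mpr ⟨h2, D, hB, rfl⟩
      have hDeq : D ∩ S₂ = D := by
        conv_rhs => rw [← hBu D hB]
        rw [h1, Finset.empty_union]
      rw [hDeq] at hDQ₂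
      exact mem_mParts.mpr (Or.inr (Or.inr ⟨hDQ₂, key₂ h1 h2⟩))
    · have hDQ₁ : D ∩ S₁ ∈ Q₁ := hr₁ ▸ mem_resPart.mpr ⟨h1, D, hB, rfl⟩
      have hDeq : D ∩ S₁ = D := by
        conv_rhs => rw [← hBu D hB]
        rw [h2, Finset.union_empty]
      rw [hDeq] at hDQ₁
      exact mem_mParts.mpr (Or.inr (Or.inl ⟨hDQ₁, key₁ h2 h1⟩))
    · -- both traces nonempty: D is a merged part
      have hDQ₁ : D ∩ S₁ ∈ Q₁ := hr₁ ▸ mem_resPart.mpr ⟨h1, D, hB, rfl⟩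
      have hDQ₂ : D ∩ S₂ ∈ Q₂ := hr₂ ▸ mem_resPart.mpr ⟨h2, D, hB, rfl⟩
      refine mem_mParts.mpr (Or.inl ⟨(D ∩ S₁, D ∩ S₂), ?_, hBu D hB⟩)
      refine Finset.mem_filter.mpr ⟨Finset.mem_product.mpr ⟨hDQ₁, hDQ₂⟩, ?_⟩
      rw [hBu D hB]
      exact hB
end Core3

section Core4
variable {α : Type*} [DecidableEq α] [Fintype α]
variable {S₁ S₂ : Finset α} {Q₁ Q₂ : Finset (Finset α)}

lemma fiber_sum_eq (hdisj : Disjoint S₁ S₂) (hunion : S₁ ∪ S₂ = Finset.univ)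
    (hne₁ : ∀ C ∈ Q₁, C.Nonempty) (hsub₁ : ∀ C ∈ Q₁, C ⊆ S₁)
    (hpd₁ : ∀ C ∈ Q₁, ∀ C' ∈ Q₁, C ≠ C' → Disjoint C C')
    (hcov₁ : ∀ x ∈ S₁, ∃ C ∈ Q₁, x ∈ C)
    (hne₂ : ∀ C ∈ Q₂, C.Nonempty) (hsub₂ : ∀ C ∈ Q₂, C ⊆ S₂)
    (hpd₂ : ∀ C ∈ Q₂, ∀ C' ∈ Q₂, C ≠ C' → Disjoint C C')
    (hcov₂ : ∀ x ∈ S₂, ∃ C ∈ Q₂, x ∈ C) (f : ℕ → ℂ) :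
    ∑ P ∈ Finset.univ.filter (fun P : Finpartition (Finset.univ : Finset α) =>
        resPart S₁ P = Q₁ ∧ resPart S₂ P = Q₂), f P.parts.card
    = ∑ M ∈ matchings Q₁ Q₂, f (Q₁.card + Q₂.card - M.card) := by
  refine Finset.sum_bij' (fun P _ => pMatch Q₁ Q₂ P)
    (fun M hM => mPartition hdisj hunion hne₁ hsub₁ hpd₁ hcov₁ hne₂ hsub₂ hpd₂ hcov₂ M hM)
    ?_ ?_ ?_ ?_ ?_
  · intro P _
    exact pMatch_mem_matchings hdisj hne₁ hsub₁ hne₂ hsub₂ P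
  · intro M hM
    rw [Finset.mem_filter]
    exact ⟨Finset.mem_univ _,
      resPart_eq_of_parts hdisj hne₁ hsub₁ hne₂ hsub₂ hM _ rfl⟩
  · intro P hP
    obtain ⟨-, hr₁, hr₂⟩ := Finset.mem_filter.mp hP
    apply Finpartition.ext
    show mParts Q₁ Q₂ (pMatch Q₁ Q₂ P) = P.parts
    exact mParts_pMatch hdisj hunion hne₂ hsub₁ hsub₂ P hr₁ hr₂
  · intro M hM
    exact pMatch_mParts hdisj hne₁ hsub₁ hne₂ hsub₂ hM _ rfl
  · intro P hP
    obtain ⟨-, hr₁, hr₂⟩ := Finset.mem_filter.mp hP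
    have hMmem := pMatch_mem_matchings hdisj hne₁ hsub₁ hne₂ hsub₂ (Q₁ := Q₁) (Q₂ := Q₂) P
    have hparts : mParts Q₁ Q₂ (pMatch Q₁ Q₂ P) = P.parts :=
      mParts_pMatch hdisj hunion hne₂ hsub₁ hsub₂ P hr₁ hr₂
    have hcard := card_mParts hdisj hne₁ hsub₁ hne₂ hsub₂ hMmem
    rw [hparts] at hcard
    show f P.parts.card = f (Q₁.card + Q₂.card - (pMatch Q₁ Q₂ P).card)
    congr 1
    omega
end Core4

section Core5
variable {α : Type*} [DecidableEq α] [Fintype α]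

lemma resPart_nonempty (S : Finset α) (P : Finpartition (Finset.univ : Finset α)) :
    ∀ C ∈ resPart S P, C.Nonempty := fun C hC =>
  Finset.nonempty_iff_ne_empty.mpr (mem_resPart.mp hC).1

lemma resPart_subset (S : Finset α) (P : Finpartition (Finset.univ : Finset α)) :
    ∀ C ∈ resPart S P, C ⊆ S := by
  intro C hC
  obtain ⟨-, B, -, rfl⟩ := mem_resPart.mp hC
  exact Finset.inter_subset_right

lemma resPart_pd (S : Finset α) (P : Finpartition (Finset.univ : Finset α)) :
    ∀ C ∈ resPart S P, ∀ C' ∈ resPart S P, C ≠ C' → Disjoint C C' := by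
  intro C hC C' hC' hne
  obtain ⟨-, B, hB, rfl⟩ := mem_resPart.mp hC
  obtain ⟨-, B', hB', rfl⟩ := mem_resPart.mp hC'
  have hBB : B ≠ B' := by rintro rfl; exact hne rfl
  exact Finset.disjoint_of_subset_left Finset.inter_subset_left
    (Finset.disjoint_of_subset_right Finset.inter_subset_left (P.disjoint hB hB' hBB))

lemma resPart_cover (S : Finset α) (P : Finpartition (Finset.univ : Finset α)) :
    ∀ x ∈ S, ∃ C ∈ resPart S P, x ∈ C := by
  intro x hx
  have hxu : x ∈ P.parts.sup id := by rw [P.sup_parts]; exact Finset.mem_univ x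
  obtain ⟨B, hB, hxB⟩ := Finset.mem_sup.mp hxu
  refine ⟨B ∩ S, mem_resPart.mpr ⟨?_, B, hB, rfl⟩, Finset.mem_inter.mpr ⟨hxB, hx⟩⟩
  exact Finset.nonempty_iff_ne_empty.mp ⟨x, Finset.mem_inter.mpr ⟨hxB, hx⟩⟩

lemma cumulant_core (S₁ S₂ : Finset α) (h₁ : S₁.Nonempty) (h₂ : S₂.Nonempty)
    (hdisj : Disjoint S₁ S₂) (hunion : S₁ ∪ S₂ = Finset.univ)
    (w : Finset α → ℂ) (hw0 : w ∅ = 1)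
    (hmul : ∀ B : Finset α, w B = w (B ∩ S₁) * w (B ∩ S₂)) :
    ∑ P : Finpartition (Finset.univ : Finset α),
      (Nat.factorial (P.parts.card - 1) : ℂ) * (-1) ^ (P.parts.card - 1) *
        ∏ B ∈ P.parts, w B = 0 := by
  have prodres : ∀ (S : Finset α) (P : Finpartition (Finset.univ : Finset α)),
      ∏ B ∈ P.parts, w (B ∩ S) = ∏ C ∈ resPart S P, w C := by
    intro S P
    have h1 : ∏ B ∈ P.parts.filter (fun B => ¬ B ∩ S = ∅), w (B ∩ S)
        = ∏ B ∈ P.parts, w (B ∩ S) := by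
      apply Finset.prod_filter_of_ne
      intro B _ hne h
      exact hne (by rw [h, hw0])
    have h2 : resPart S P = (P.parts.filter (fun B => ¬ B ∩ S = ∅)).image (· ∩ S) := by
      ext C
      simp only [mem_resPart, Finset.mem_image, Finset.mem_filter]
      constructor
      · rintro ⟨hCne, B, hB, rfl⟩
        exact ⟨B, ⟨hB, hCne⟩, rfl⟩
      · rintro ⟨B, ⟨hB, hBne⟩, rfl⟩
        exact ⟨hBne, B, hB, rfl⟩
    rw [h2, Finset.prod_image, h1]
    intro B hB B' hB' h
    obtain ⟨hBp, hBne⟩ := Finset.mem_filter.mp hB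
    obtain ⟨hB'p, -⟩ := Finset.mem_filter.mp hB'
    obtain ⟨x, hx⟩ := Finset.nonempty_iff_ne_empty.mpr hBne
    exact part_eq hBp hB'p (Finset.mem_inter.mp hx).1
      (Finset.mem_inter.mp ((show B ∩ S = B' ∩ S from h) ▸ hx)).1
  have hsummand : ∀ P : Finpartition (Finset.univ : Finset α),
      (∏ B ∈ P.parts, w B)
        = (∏ C ∈ resPart S₁ P, w C) * (∏ C ∈ resPart S₂ P, w C) := by
    intro P
    rw [← prodres S₁ P, ← prodres S₂ P, ← Finset.prod_mul_distrib]
    exact Finset.prod_congr rfl (fun B _ => hmul B)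
  set cc : ℕ → ℂ := fun k => ((k - 1).factorial : ℂ) * (-1) ^ (k - 1) with hcc
  have hmain : ∑ P ∈ (Finset.univ : Finset (Finpartition (Finset.univ : Finset α))),
      cc P.parts.card *
        ((∏ C ∈ resPart S₁ P, w C) * (∏ C ∈ resPart S₂ P, w C)) = 0 := by
    rw [← Finset.sum_fiberwise_of_maps_to
      (g := fun P : Finpartition (Finset.univ : Finset α) =>
        (resPart S₁ P, resPart S₂ P))
      (t := Finset.univ.image (fun P : Finpartition (Finset.univ : Finset α) =>
        (resPart S₁ P, resPart S₂ P)))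
      (fun P _ => Finset.mem_image_of_mem _ (Finset.mem_univ P))]
    apply Finset.sum_eq_zero
    intro q hq
    obtain ⟨P₀, -, rfl⟩ := Finset.mem_image.mp hq
    set Q₁ := resPart S₁ P₀ with hQ₁
    set Q₂ := resPart S₂ P₀ with hQ₂
    have hfilter : (Finset.univ.filter
        (fun P : Finpartition (Finset.univ : Finset α) =>
          (resPart S₁ P, resPart S₂ P) = (Q₁, Q₂)))
        = Finset.univ.filter (fun P : Finpartition (Finset.univ : Finset α) =>
            resPart S₁ P = Q₁ ∧ resPart S₂ P = Q₂) := by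
      apply Finset.filter_congr
      intro P _
      simp [Prod.ext_iff]
    have hconst : ∀ P ∈ Finset.univ.filter
        (fun P : Finpartition (Finset.univ : Finset α) =>
          resPart S₁ P = Q₁ ∧ resPart S₂ P = Q₂),
        cc P.parts.card * ((∏ C ∈ resPart S₁ P, w C) * (∏ C ∈ resPart S₂ P, w C))
          = ((∏ C ∈ Q₁, w C) * (∏ C ∈ Q₂, w C)) * cc P.parts.card := by
      intro P hP
      obtain ⟨-, hr₁, hr₂⟩ := Finset.mem_filter.mp hP
      rw [hr₁, hr₂]
      ring
    rw [hfilter, Finset.sum_congr rfl hconst, ← Finset.mul_sum]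
    have hzero : ∑ P ∈ Finset.univ.filter
        (fun P : Finpartition (Finset.univ : Finset α) =>
          resPart S₁ P = Q₁ ∧ resPart S₂ P = Q₂), cc P.parts.card = 0 := by
      rw [fiber_sum_eq hdisj hunion (resPart_nonempty S₁ P₀) (resPart_subset S₁ P₀)
        (resPart_pd S₁ P₀) (resPart_cover S₁ P₀) (resPart_nonempty S₂ P₀)
        (resPart_subset S₂ P₀) (resPart_pd S₂ P₀) (resPart_cover S₂ P₀) cc]
      rw [sum_matchings Q₁ Q₂ (fun m => cc (Q₁.card + Q₂.card - m))]
      obtain ⟨x₁, hx₁⟩ := h₁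
      obtain ⟨C₁, hC₁, -⟩ := resPart_cover S₁ P₀ x₁ hx₁
      obtain ⟨x₂, hx₂⟩ := h₂
      obtain ⟨C₂, hC₂, -⟩ := resPart_cover S₂ P₀ x₂ hx₂
      obtain ⟨A, hA⟩ : ∃ A, Q₁.card = A + 1 :=
        ⟨Q₁.card - 1, by
          have := Finset.card_pos.mpr ⟨C₁, hC₁⟩
          rw [← hQ₁] at this
          omega⟩
      obtain ⟨B, hB⟩ : ∃ B, Q₂.card = B + 1 :=
        ⟨Q₂.card - 1, by
          have := Finset.card_pos.mpr ⟨C₂, hC₂⟩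
          rw [← hQ₂] at this
          omega⟩
      rw [hA, hB]
      have := key_identity A B
      rw [← this]
      apply Finset.sum_congr rfl
      intro m hm
      have hm' : m < A + 2 := Finset.mem_range.mp hm
      have e : A + 1 + (B + 1) - m - 1 = A + B + 1 - m := by omega
      simp only [hcc, e]
    rw [hzero, mul_zero]
  rw [← hmain]
  apply Finset.sum_congr rfl
  intro P _
  rw [hsummand P, hcc]
end Core5

end CumulantAux

/-- Suppose `n ≥ 2` and `{1,…,n}` is the disjoint union of two nonempty
subsets `S₁`, `S₂` such that the sequential weak values are weakly independent over this
splitting.  Then the cumulant of the sequential weak values of the full set vanishes. -/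
theorem cumulant_weakValue_eq_zero_of_weaklyIndependent
    {H : Type*} [NormedAddCommGroup H] [InnerProductSpace ℂ H] [FiniteDimensional ℂ H]
    {n : ℕ} (hn : 2 ≤ n) (ψi ψf : H)
    (A : Fin n → Module.End ℂ H) (U : Fin (n + 1) → Module.End ℂ H)
    (hD : (inner ℂ ψf (seqOp n A U ∅ ψi) : ℂ) ≠ 0)
    (S₁ S₂ : Finset (Fin n)) (h₁ : S₁.Nonempty) (h₂ : S₂.Nonempty)
    (hdisj : Disjoint S₁ S₂) (hunion : S₁ ∪ S₂ = Finset.univ)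
    (hwi : ∀ T₁ ⊆ S₁, ∀ T₂ ⊆ S₂, T₁.Nonempty → T₂.Nonempty →
      weakValue n A U ψi ψf (T₁ ∪ T₂) =
        weakValue n A U ψi ψf T₁ * weakValue n A U ψi ψf T₂) :
    ∑ P : Finpartition (Finset.univ : Finset (Fin n)),
      (Nat.factorial (P.parts.card - 1) : ℂ) * (-1) ^ (P.parts.card - 1) *
        ∏ B ∈ P.parts, weakValue n A U ψi ψf B = 0 := by
  have hw0 : weakValue n A U ψi ψf ∅ = 1 := by
    unfold weakValue
    exact div_self hD
  have hmul : ∀ B : Finset (Fin n),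
      weakValue n A U ψi ψf B
        = weakValue n A U ψi ψf (B ∩ S₁) * weakValue n A U ψi ψf (B ∩ S₂) := by
    intro B
    have hBu : (B ∩ S₁) ∪ (B ∩ S₂) = B := by
      rw [← Finset.inter_union_distrib_left, hunion, Finset.inter_univ]
    by_cases hB1 : (B ∩ S₁).Nonempty <;> by_cases hB2 : (B ∩ S₂).Nonempty
    · have := hwi (B ∩ S₁) Finset.inter_subset_right (B ∩ S₂) Finset.inter_subset_right hB1 hB2
      rw [← this, hBu]
    · have h2 : B ∩ S₂ = ∅ := Finset.not_nonempty_iff_eq_empty.mp hB2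
      have hBB : B ∩ S₁ = B := by
        conv_rhs => rw [← hBu]
        rw [h2, Finset.union_empty]
      rw [hBB, h2, hw0, mul_one]
    · have h1 : B ∩ S₁ = ∅ := Finset.not_nonempty_iff_eq_empty.mp hB1
      have hBB : B ∩ S₂ = B := by
        conv_rhs => rw [← hBu]
        rw [h1, Finset.empty_union]
      rw [hBB, h1, hw0, one_mul]
    · have h1 : B ∩ S₁ = ∅ := Finset.not_nonempty_iff_eq_empty.mp hB1
      have h2 : B ∩ S₂ = ∅ := Finset.not_nonempty_iff_eq_empty.mp hB2
      have hBe : B = ∅ := by rw [← hBu, h1, h2, Finset.union_empty]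
      rw [h1, h2, hBe, hw0, mul_one]
  exact cumulant_core S₁ S₂ h₁ h₂ hdisj hunion (weakValue n A U ψi ψf) hw0 hmul
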